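/- Let H be a complex Hilbert space, α, β positive real numbers with α + β = 1, and T, S bounded linear operators on H such that T*S is self-adjoint and α·T*T + β·S*S = I. Then for all x, y ∈ H, ‖β·Sx + α·Ty‖² ≤ β·‖x‖² + α·‖y‖². -/

import Mathlib

theorem bohr_operator_inequality {H : Type*} [NormedAddCommGroup H]
    [InnerProductSpace ℂ H] [CompleteSpace H]
    (α β : ℝ) (hα : 0 < α) (hβ : 0 < β) (hαβ : α + β = 1)
    (T S : H →L[ℂ] H)
    (hsa : IsSelfAdjoint (ContinuousLinearMap.adjoint T * S))
    (heq : α • (ContinuousLinearMap.adjoint T * T) + β • (ContinuousLinearMap.adjoint S * S)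
      = (1 : H →L[ℂ] H)) :
    ∀ x y : H, ‖β • S x + α • T y‖ ^ 2 ≤ β * ‖x‖ ^ 2 + α * ‖y‖ ^ 2 := by
  intro x y
  have smul_coe : ∀ (r : ℝ) (v : H), r • v = (r : ℂ) • v := by
    intro r v
    rw [← algebraMap_smul ℂ r v]
    rfl
  -- identity from heq
  have hz : ∀ z : H, α * ‖T z‖ ^ 2 + β * ‖S z‖ ^ 2 = ‖z‖ ^ 2 := by
    intro z
    have h1 : α • (ContinuousLinearMap.adjoint T) (T z)
        + β • (ContinuousLinearMap.adjoint S) (S z) = z := by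
      have := congrArg (fun f : H →L[ℂ] H => f z) heq
      simpa using this
    have h2 : (inner ℂ (α • (ContinuousLinearMap.adjoint T) (T z)
        + β • (ContinuousLinearMap.adjoint S) (S z)) z : ℂ) = inner ℂ z z := by rw [h1]
    rw [inner_add_left, smul_coe, smul_coe, inner_smul_left, inner_smul_left,
      ContinuousLinearMap.adjoint_inner_left, ContinuousLinearMap.adjoint_inner_left,
      inner_self_eq_norm_sq_to_K, inner_self_eq_norm_sq_to_K, inner_self_eq_norm_sq_to_K,
      Complex.conj_ofReal, Complex.conj_ofReal] at h2
    have h3 : ((α * ‖T z‖ ^ 2 + β * ‖S z‖ ^ 2 : ℝ) : ℂ) = ((‖z‖ ^ 2 : ℝ) : ℂ) := by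
      push_cast
      convert h2 using 2 <;> rfl
    exact_mod_cast h3
  -- symmetry of the cross term
  have hsym : (inner ℂ (S x) (T y) : ℂ) = inner ℂ (T x) (S y) := by
    have h1 : ContinuousLinearMap.adjoint S * T = ContinuousLinearMap.adjoint T * S := by
      have := hsa
      rwa [IsSelfAdjoint, star_mul, ContinuousLinearMap.star_eq_adjoint,
        ContinuousLinearMap.star_eq_adjoint, ContinuousLinearMap.adjoint_adjoint] at this
    have h2 : (ContinuousLinearMap.adjoint T) (S x) = (ContinuousLinearMap.adjoint S) (T x) :=
      (congrArg (fun f : H →L[ℂ] H => f x) h1).symm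
    calc (inner ℂ (S x) (T y) : ℂ)
        = inner ℂ ((ContinuousLinearMap.adjoint T) (S x)) y := by
          rw [ContinuousLinearMap.adjoint_inner_left]
      _ = inner ℂ ((ContinuousLinearMap.adjoint S) (T x)) y := by rw [h2]
      _ = inner ℂ (T x) (S y) := by rw [ContinuousLinearMap.adjoint_inner_left]
  -- expand the norm
  have hexp : ‖β • S x + α • T y‖ ^ 2
      = β ^ 2 * ‖S x‖ ^ 2 + 2 * (β * α * Complex.re (inner ℂ (S x) (T y) : ℂ))
        + α ^ 2 * ‖T y‖ ^ 2 := by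
    rw [@norm_add_sq ℂ]
    have h4 : (inner ℂ (β • S x) (α • T y) : ℂ) = ((β * α : ℝ) : ℂ) * inner ℂ (S x) (T y) := by
      rw [smul_coe, smul_coe, inner_smul_left, inner_smul_right, Complex.conj_ofReal]
      push_cast
      ring
    rw [h4]
    simp [norm_smul, abs_of_pos hα, abs_of_pos hβ, Complex.ofReal_mul]
    ring
  have hcs : Complex.re (inner ℂ (T x) (S y) : ℂ) ≤ ‖T x‖ * ‖S y‖ := by
    simpa [RCLike.re_to_complex] using re_inner_le_norm (𝕜 := ℂ) (T x) (S y)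
  have hre : Complex.re (inner ℂ (S x) (T y) : ℂ) = Complex.re (inner ℂ (T x) (S y) : ℂ) := by
    rw [hsym]
  have hx := hz x
  have hy := hz y
  rw [hexp, ← hx, ← hy, hre]
  nlinarith [sq_nonneg (‖T x‖ - ‖S y‖), hcs, mul_pos hα hβ, sq_nonneg ‖S x‖, sq_nonneg ‖T y‖]
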